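/- With the setup of the E-LDA objective, the function f̂(E) = f(E ∪ P) − f(P), where P consists of one placeholder link per document assigning a fixed constant value c to every word, is submodular: for all E ⊆ E' ⊆ Φ × D and any single link a = (τ, d) ∉ E', f̂(E ∪ {a}) − f̂(E) ≥ f̂(E' ∪ {a}) − f̂(E'). -/

import Mathlib

open Real

/-- E-LDA objective with a placeholder topic of constant value `c` for every
document: each word of document `d` contributes the max of `c` and the values
`φ τ w` over topics `τ` linked to `d` in `E`. -/
noncomputable def eldaObjP {V D Φ : Type*} [Fintype D] [Fintype Φ]
    (doc : D → List V) (φ : Φ → V → ℝ) (c : ℝ) (E : Finset (Φ × D)) : ℝ :=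
  ∑ d : D, ((doc d).map
    (fun w => sSup (insert c ((fun τ => φ τ w) '' {τ | (τ, d) ∈ E})))).sum

/-- The normalized objective `f̂(E) = f(E ∪ P) − f(P)`, where `P` is the set of
placeholder links (here absorbed into the definition of `eldaObjP`, with
`f(P) = eldaObjP doc φ c ∅`). -/
noncomputable def eldaObjHat {V D Φ : Type*} [Fintype D] [Fintype Φ]
    (doc : D → List V) (φ : Φ → V → ℝ) (c : ℝ) (E : Finset (Φ × D)) : ℝ :=
  eldaObjP doc φ c E - eldaObjP doc φ c ∅

section Aux

variable {V D Φ : Type*} [Fintype D] [Fintype Φ] [DecidableEq Φ] [DecidableEq D]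

/-- Per-word value: max of `c` and the linked topics' values. -/
noncomputable def mval (φ : Φ → V → ℝ) (c : ℝ) (E : Finset (Φ × D)) (d : D) (w : V) : ℝ :=
  sSup (insert c ((fun τ => φ τ w) '' {τ | (τ, d) ∈ E}))

lemma mval_set_finite (φ : Φ → V → ℝ) (c : ℝ) (E : Finset (Φ × D)) (d : D) (w : V) :
    (insert c ((fun τ => φ τ w) '' {τ | (τ, d) ∈ E})).Finite :=
  ((Set.toFinite _).image _).insert c

lemma mval_mono (φ : Φ → V → ℝ) (c : ℝ) {E E' : Finset (Φ × D)} (h : E ⊆ E') (d : D) (w : V) :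
    mval φ c E d w ≤ mval φ c E' d w :=
  csSup_le_csSup (mval_set_finite φ c E' d w).bddAbove
    ⟨c, Set.mem_insert _ _⟩
    (Set.insert_subset_insert (Set.image_mono (fun τ hτ => h hτ)))

lemma mval_insert_self (φ : Φ → V → ℝ) (c : ℝ) (E : Finset (Φ × D)) (a : Φ × D) (w : V) :
    mval φ c (insert a E) a.2 w = max (φ a.1 w) (mval φ c E a.2 w) := by
  have hset : {τ | (τ, a.2) ∈ insert a E} = insert a.1 {τ | (τ, a.2) ∈ E} := by
    ext τ
    simp [Finset.mem_insert, Prod.ext_iff]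
  unfold mval
  rw [hset, Set.image_insert_eq, Set.insert_comm]
  exact csSup_insert (mval_set_finite φ c E a.2 w).bddAbove ⟨c, Set.mem_insert _ _⟩

lemma mval_insert_ne (φ : Φ → V → ℝ) (c : ℝ) (E : Finset (Φ × D)) (a : Φ × D) {d : D}
    (hd : d ≠ a.2) (w : V) :
    mval φ c (insert a E) d w = mval φ c E d w := by
  have hset : {τ | (τ, d) ∈ insert a E} = {τ | (τ, d) ∈ E} := by
    ext τ
    simp only [Set.mem_setOf_eq, Finset.mem_insert, Prod.ext_iff]
    constructor
    · rintro (⟨h1, h2⟩ | h)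
      · exact absurd h2 hd
      · exact h
    · exact fun h => Or.inr h
  unfold mval
  rw [hset]

lemma list_sum_map_sub (l : List V) (f g : V → ℝ) :
    (l.map f).sum - (l.map g).sum = (l.map fun w => f w - g w).sum := by
  induction l with
  | nil => simp
  | cons x xs ih => simp only [List.map_cons, List.sum_cons]; linarith

end Aux

theorem eldaHat_submodular {V D Φ : Type*} [Fintype D] [Fintype Φ]
    [DecidableEq Φ] [DecidableEq D]
    (doc : D → List V) (φ : Φ → V → ℝ) (c : ℝ)
    (E E' : Finset (Φ × D)) (hsub : E ⊆ E') (a : Φ × D) (ha : a ∉ E') :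
    eldaObjHat doc φ c (insert a E') - eldaObjHat doc φ c E' ≤
      eldaObjHat doc φ c (insert a E) - eldaObjHat doc φ c E := by
  have key : ∀ (F F' : Finset (Φ × D)), F ⊆ F' →
      eldaObjP doc φ c (insert a F') - eldaObjP doc φ c F' ≤
        eldaObjP doc φ c (insert a F) - eldaObjP doc φ c F := by
    intro F F' hFF
    unfold eldaObjP
    rw [← Finset.sum_sub_distrib, ← Finset.sum_sub_distrib]
    apply Finset.sum_le_sum
    intro d _
    rw [list_sum_map_sub, list_sum_map_sub]
    apply List.sum_le_sum
    intro w _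
    show mval φ c (insert a F') d w - mval φ c F' d w ≤
      mval φ c (insert a F) d w - mval φ c F d w
    by_cases hd : d = a.2
    · subst hd
      rw [mval_insert_self, mval_insert_self]
      have hm : mval φ c F a.2 w ≤ mval φ c F' a.2 w := mval_mono φ c hFF a.2 w
      rcases le_total (φ a.1 w) (mval φ c F a.2 w) with h | h
      · rw [max_eq_right h, max_eq_right (h.trans hm)]
        simp
      · rw [max_eq_left h]
        rcases le_total (φ a.1 w) (mval φ c F' a.2 w) with h' | h'
        · rw [max_eq_right h']; linarith
        · rw [max_eq_left h']; linarith
    · rw [mval_insert_ne φ c F a hd, mval_insert_ne φ c F' a hd]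
      simp
  have := key E E' hsub
  unfold eldaObjHat
  linarith
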